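/- Let H be a group in which commutators are central (i.e. H is nilpotent of class at most 2) and in which every element of finite order is trivial (H is torsion-free). If H is virtually abelian (it has an abelian subgroup of finite index), then H is abelian. -/

import Mathlib

theorem virtually_abelian_of_class_two_torsion_free (H : Type*) [Group H]
    (hcentral : ∀ g h x : H, (g * h * g⁻¹ * h⁻¹) * x = x * (g * h * g⁻¹ * h⁻¹))
    (htf : ∀ g : H, ∀ n : ℕ, 1 ≤ n → g ^ n = 1 → g = 1)
    (hva : ∃ A : Subgroup H, A.index ≠ 0 ∧ ∀ a b : A, a * b = b * a) :
    ∀ g h : H, g * h = h * g := by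
  obtain ⟨A, hA, hAab⟩ := hva
  -- powers of commutators are central
  have cpow : ∀ (a b : H) (n : ℕ) (x : H),
      (a * b * a⁻¹ * b⁻¹) ^ n * x = x * (a * b * a⁻¹ * b⁻¹) ^ n := by
    intro a b n x
    induction n with
    | zero => simp
    | succ n ih =>
      rw [pow_succ, mul_assoc, hcentral a b x, ← mul_assoc, ih, mul_assoc]
  -- a * b^n = [a,b]^n * b^n * a
  have lem1 : ∀ (a b : H) (n : ℕ),
      a * b ^ n = (a * b * a⁻¹ * b⁻¹) ^ n * b ^ n * a := by
    intro a b n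
    induction n with
    | zero => simp
    | succ n ih =>
      have hab : a * b = (a * b * a⁻¹ * b⁻¹) * b * a := by group
      calc a * b ^ (n + 1) = (a * b ^ n) * b := by rw [pow_succ, mul_assoc]
        _ = (a * b * a⁻¹ * b⁻¹) ^ n * b ^ n * (a * b) := by rw [ih]; group
        _ = (a * b * a⁻¹ * b⁻¹) ^ n * b ^ n * ((a * b * a⁻¹ * b⁻¹) * b * a) := by
              rw [← hab]
        _ = (a * b * a⁻¹ * b⁻¹) ^ n * ((a * b * a⁻¹ * b⁻¹) * b ^ n) * b * a := by
              have h1 := hcentral a b (b ^ n)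
              calc (a * b * a⁻¹ * b⁻¹) ^ n * b ^ n * ((a * b * a⁻¹ * b⁻¹) * b * a)
                  = (a * b * a⁻¹ * b⁻¹) ^ n * (b ^ n * (a * b * a⁻¹ * b⁻¹)) * (b * a) := by
                    group
                _ = (a * b * a⁻¹ * b⁻¹) ^ n * ((a * b * a⁻¹ * b⁻¹) * b ^ n) * (b * a) := by
                    rw [h1]
                _ = (a * b * a⁻¹ * b⁻¹) ^ n * ((a * b * a⁻¹ * b⁻¹) * b ^ n) * b * a := by
                    group
        _ = (a * b * a⁻¹ * b⁻¹) ^ (n + 1) * b ^ (n + 1) * a := by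
              rw [pow_succ, pow_succ]; group
  -- a^n * b = [a,b]^n * b * a^n
  have lem2 : ∀ (a b : H) (n : ℕ),
      a ^ n * b = (a * b * a⁻¹ * b⁻¹) ^ n * b * a ^ n := by
    intro a b n
    induction n with
    | zero => simp
    | succ n ih =>
      have hab : a * b = (a * b * a⁻¹ * b⁻¹) * b * a := by group
      calc a ^ (n + 1) * b = a * (a ^ n * b) := by rw [pow_succ']; group
        _ = a * ((a * b * a⁻¹ * b⁻¹) ^ n * b * a ^ n) := by rw [ih]
        _ = (a * b * a⁻¹ * b⁻¹) ^ n * (a * b) * a ^ n := by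
              have h1 := cpow a b n a
              calc a * ((a * b * a⁻¹ * b⁻¹) ^ n * b * a ^ n)
                  = a * (a * b * a⁻¹ * b⁻¹) ^ n * (b * a ^ n) := by group
                _ = (a * b * a⁻¹ * b⁻¹) ^ n * a * (b * a ^ n) := by rw [← h1]
                _ = (a * b * a⁻¹ * b⁻¹) ^ n * (a * b) * a ^ n := by group
        _ = (a * b * a⁻¹ * b⁻¹) ^ n * ((a * b * a⁻¹ * b⁻¹) * b * a) * a ^ n := by
              rw [← hab]
        _ = (a * b * a⁻¹ * b⁻¹) ^ (n + 1) * b * a ^ (n + 1) := by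
              rw [pow_succ, pow_succ']; group
  intro g h
  obtain ⟨k, hk0, -, hgk⟩ := Subgroup.exists_pow_mem_of_index_ne_zero hA g
  obtain ⟨m, hm0, -, hhm⟩ := Subgroup.exists_pow_mem_of_index_ne_zero hA h
  have hcomm : g ^ k * h ^ m = h ^ m * g ^ k := by
    have := hAab ⟨g ^ k, hgk⟩ ⟨h ^ m, hhm⟩
    exact Subtype.ext_iff.mp this
  set c := g * h * g⁻¹ * h⁻¹ with hc
  -- [g^k, h] = c^k
  have hck : g ^ k * h * (g ^ k)⁻¹ * h⁻¹ = c ^ k := by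
    rw [lem2 g h k, ← hc]; group
  -- g^k * h^m = c^(k*m) * h^m * g^k
  have hmain : g ^ k * h ^ m = c ^ (k * m) * (h ^ m * g ^ k) := by
    calc g ^ k * h ^ m
        = (g ^ k * h * (g ^ k)⁻¹ * h⁻¹) ^ m * h ^ m * g ^ k := lem1 (g ^ k) h m
      _ = (c ^ k) ^ m * h ^ m * g ^ k := by rw [hck]
      _ = c ^ (k * m) * (h ^ m * g ^ k) := by rw [← pow_mul]; group
  have hc1 : c ^ (k * m) = 1 := by
    have : h ^ m * g ^ k = c ^ (k * m) * (h ^ m * g ^ k) := by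
      rw [← hmain, hcomm]
    exact (mul_eq_right.mp this.symm)
  have : c = 1 := htf c (k * m) (Nat.one_le_iff_ne_zero.mpr (by positivity)) hc1
  have := this
  rw [hc] at this
  calc g * h = (g * h * g⁻¹ * h⁻¹) * (h * g) := by group
    _ = 1 * (h * g) := by rw [this]
    _ = h * g := one_mul _
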